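/- arXiv:math/0703858 — 2 statements merged into one kernel-verified Lean document; each statement's English description precedes it below -/
import Mathlib

section
/- In the population noisy factor model with w_j := (√λ_1 u_{j1},…,√λ_K u_{jK}), D := {j : w_j ≠ 0}, B := {j : Σ_{jy} ≠ 0} and A := {j : θ_j ≠ 0}: (i) if K = 1 and β_1 ≠ 0, then A = B = D; (ii) if λ_1 = λ_2 = … = λ_K, then A = B. -/
open Matrix Finset

noncomputable section

lemma vmv_mul {n : Type*} [Fintype n] [DecidableEq n] (a b c d : n → ℝ) :
    vecMulVec a b * vecMulVec c d = (b ⬝ᵥ c) • vecMulVec a d := by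
  ext i j
  simp only [Matrix.mul_apply, vecMulVec_apply, Matrix.smul_apply, smul_eq_mul,
    dotProduct, Finset.sum_mul]
  exact Finset.sum_congr rfl fun l _ => by ring

lemma vmv_mulVec {n : Type*} [Fintype n] (a b x : n → ℝ) :
    vecMulVec a b *ᵥ x = (b ⬝ᵥ x) • a := by
  ext i
  simp only [mulVec, dotProduct, vecMulVec_apply, Pi.smul_apply, smul_eq_mul,
    Finset.sum_mul]
  exact Finset.sum_congr rfl fun l _ => by ring

lemma sum_mulVec' {n m ι : Type*} [Fintype n] [Fintype m] (s : Finset ι)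
    (A : ι → Matrix m n ℝ) (x : n → ℝ) :
    (∑ k ∈ s, A k) *ᵥ x = ∑ k ∈ s, A k *ᵥ x := by
  ext i
  simp only [mulVec, dotProduct, Matrix.sum_apply, Finset.sum_mul, Finset.sum_apply]
  rw [Finset.sum_comm]

lemma mulVec_sum' {n m ι : Type*} [Fintype n] [Fintype m] (s : Finset ι)
    (A : Matrix m n ℝ) (v : ι → n → ℝ) :
    A *ᵥ (∑ k ∈ s, v k) = ∑ k ∈ s, A *ᵥ v k := by
  ext i
  simp only [mulVec, dotProduct, Finset.sum_apply, Finset.mul_sum]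
  rw [Finset.sum_comm]

theorem statement_4 (p M K : ℕ) (hMp : M ≤ p) (hKM : K ≤ M)
    (u : Fin p → Fin p → ℝ)
    (hu_orthonormal_basis : ∀ k k' : Fin p,
      (∑ j, u k j * u k' j) = if k = k' then (1 : ℝ) else 0)
    (lam : Fin M → ℝ) (hlam : ∀ k, 0 < lam k)
    (hlam_anti : ∀ k k' : Fin M, k ≤ k' → lam k' ≤ lam k)
    (σ0 : ℝ) (hσ0 : 0 < σ0) (β : Fin K → ℝ)
    (Sig : Matrix (Fin p) (Fin p) ℝ)
    (hSig : Sig = (∑ k : Fin M,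
        lam k • vecMulVec (u (Fin.castLE hMp k)) (u (Fin.castLE hMp k)))
      + σ0 ^ 2 • (1 : Matrix (Fin p) (Fin p) ℝ))
    (SigPy : Fin p → ℝ)
    (hSigPy : SigPy = ∑ k : Fin K, (β k * Real.sqrt (lam (Fin.castLE hKM k))) •
        u (Fin.castLE hMp (Fin.castLE hKM k)))
    (θ : Fin p → ℝ) (hθ : θ = Sig⁻¹ *ᵥ SigPy)
    (w : Fin p → Fin K → ℝ)
    (hw : ∀ j k, w j k = Real.sqrt (lam (Fin.castLE hKM k)) *
        u (Fin.castLE hMp (Fin.castLE hKM k)) j)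
    (D B A : Set (Fin p))
    (hD : D = {j | w j ≠ 0}) (hB : B = {j | SigPy j ≠ 0}) (hA : A = {j | θ j ≠ 0}) :
    ((K = 1 ∧ ∀ k : Fin K, β k ≠ 0) → A = B ∧ B = D) ∧
    ((∀ k k' : Fin K, lam (Fin.castLE hKM k) = lam (Fin.castLE hKM k')) → A = B) := by
  -- notation
  set U : Fin M → Fin p → ℝ := fun k => u (Fin.castLE hMp k) with hU
  have hUdot : ∀ k k' : Fin M, U k ⬝ᵥ U k' = if k = k' then (1:ℝ) else 0 := by
    intro k k'
    simp only [hU, dotProduct]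
    rw [hu_orthonormal_basis]
    simp [Fin.castLE_inj]
  have hden : ∀ k : Fin M, lam k + σ0 ^ 2 ≠ 0 :=
    fun k => ne_of_gt (add_pos_of_pos_of_nonneg (hlam k) (sq_nonneg σ0))
  have hσ2 : (σ0 : ℝ) ^ 2 ≠ 0 := pow_ne_zero 2 (ne_of_gt hσ0)
  set P : Fin M → Matrix (Fin p) (Fin p) ℝ := fun k => vecMulVec (U k) (U k) with hP
  have key : ∀ k k' : Fin M, P k * P k' = if k = k' then P k else 0 := by
    intro k k'
    rw [hP, vmv_mul, hUdot]
    split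
    · next h => subst h; simp
    · simp
  set μ : Fin M → ℝ := fun k => lam k / (lam k + σ0 ^ 2) with hμ
  set S : Matrix (Fin p) (Fin p) ℝ := ∑ k, lam k • P k with hS
  set Q : Matrix (Fin p) (Fin p) ℝ := ∑ k, μ k • P k with hQ
  have hSigS : Sig = S + σ0 ^ 2 • 1 := hSig
  have hSQ : S * Q = ∑ k, (lam k * μ k) • P k := by
    rw [hS, hQ, Finset.sum_mul]
    refine Finset.sum_congr rfl fun k _ => ?_
    rw [Finset.mul_sum]
    have : ∀ k' : Fin M, (lam k • P k) * (μ k' • P k') =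
        if k = k' then (lam k * μ k') • P k else 0 := by
      intro k'
      rw [smul_mul_assoc, Matrix.mul_smul, key, smul_smul]
      split <;> simp
    rw [Finset.sum_congr rfl fun k' _ => this k']
    simp
  have hmul : Sig * ((σ0 ^ 2)⁻¹ • ((1 : Matrix (Fin p) (Fin p) ℝ) - Q)) = 1 := by
    have hzero : S - (∑ k, (lam k * μ k) • P k) - σ0 ^ 2 • Q = 0 := by
      rw [hS, hQ, Finset.smul_sum, ← Finset.sum_sub_distrib, ← Finset.sum_sub_distrib]
      refine Finset.sum_eq_zero fun k _ => ?_
      rw [smul_smul, ← sub_smul, ← sub_smul]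
      convert zero_smul ℝ (P k) using 2
      rw [hμ]
      field_simp [hden k]
      ring
    have h2 : S - (∑ k, (lam k * μ k) • P k) = σ0 ^ 2 • Q :=
      sub_eq_zero.mp hzero
    have expand : Sig * ((1 : Matrix (Fin p) (Fin p) ℝ) - Q) = σ0 ^ 2 • 1 := by
      rw [hSigS, add_mul, mul_sub, mul_sub, mul_one, mul_one, hSQ,
        Matrix.smul_mul, one_mul]
      rw [h2]
      abel
    rw [Matrix.mul_smul, expand, smul_smul, inv_mul_cancel₀ hσ2, one_smul]
  -- the explicit formula for θ
  set c : Fin K → ℝ := fun k => β k * Real.sqrt (lam (Fin.castLE hKM k)) /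
      (lam (Fin.castLE hKM k) + σ0 ^ 2) with hc
  have hSU : ∀ m : Fin M, Sig *ᵥ U m = (lam m + σ0 ^ 2) • U m := by
    intro m
    rw [hSigS, Matrix.add_mulVec, Matrix.smul_mulVec, Matrix.one_mulVec,
      hS, sum_mulVec']
    have : ∀ k : Fin M, (lam k • P k) *ᵥ U m = if k = m then lam k • U k else 0 := by
      intro k
      rw [Matrix.smul_mulVec, hP, vmv_mulVec, hUdot]
      split <;> simp [smul_smul]
    rw [Finset.sum_congr rfl fun k _ => this k, Finset.sum_ite_eq' univ m
      (fun k => lam k • U k)]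
    simp [add_smul]
  have hSv : Sig *ᵥ (∑ k : Fin K, c k • U (Fin.castLE hKM k)) = SigPy := by
    rw [mulVec_sum', hSigPy]
    refine Finset.sum_congr rfl fun k _ => ?_
    rw [Matrix.mulVec_smul, hSU, smul_smul]
    congr 1
    rw [hc]
    exact div_mul_cancel₀ _ (hden _)
  have hθv : θ = ∑ k : Fin K, c k • U (Fin.castLE hKM k) := by
    rw [hθ, ← hSv, Matrix.mulVec_mulVec,
      Matrix.nonsing_inv_mul _ (Matrix.isUnit_det_of_right_inverse hmul),
      Matrix.one_mulVec]
  have hθj : ∀ j, θ j = ∑ k : Fin K, c k * U (Fin.castLE hKM k) j := by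
    intro j; rw [hθv]; simp
  have hSigPyj : ∀ j, SigPy j = ∑ k : Fin K,
      (β k * Real.sqrt (lam (Fin.castLE hKM k))) * U (Fin.castLE hKM k) j := by
    intro j; rw [hSigPy]; simp [hU]
  constructor
  · rintro ⟨hK1, hβ⟩
    subst hK1
    have hsq : Real.sqrt (lam (Fin.castLE hKM 0)) ≠ 0 :=
      ne_of_gt (Real.sqrt_pos.mpr (hlam _))
    have hc0 : c 0 ≠ 0 := by
      rw [hc]
      exact div_ne_zero (mul_ne_zero (hβ 0) hsq) (hden _)
    constructor
    · ext j
      rw [hA, hB]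
      simp only [Set.mem_setOf_eq]
      rw [hθj j, hSigPyj j, Fin.sum_univ_one, Fin.sum_univ_one]
      rw [mul_ne_zero_iff, mul_ne_zero_iff]
      simp [hc0, mul_ne_zero (hβ 0) hsq]
    · ext j
      rw [hB, hD]
      simp only [Set.mem_setOf_eq]
      rw [hSigPyj j, Fin.sum_univ_one, Function.ne_iff]
      constructor
      · intro h
        refine ⟨0, ?_⟩
        rw [hw j 0]
        simp only [Pi.zero_apply]
        rcases mul_ne_zero_iff.mp h with ⟨-, hx⟩
        exact mul_ne_zero hsq hx
      · rintro ⟨a, ha⟩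
        have ha0 : a = 0 := Subsingleton.elim a 0
        subst ha0
        rw [hw j 0] at ha
        simp only [Pi.zero_apply] at ha
        rcases mul_ne_zero_iff.mp ha with ⟨-, hx⟩
        exact mul_ne_zero (mul_ne_zero (hβ 0) hsq) hx
  · intro hEq
    ext j
    rw [hA, hB]
    simp only [Set.mem_setOf_eq]
    rcases Nat.eq_zero_or_pos K with hK0 | hKpos
    · subst hK0
      rw [hθj j, hSigPyj j]
      simp
    · set k0 : Fin K := ⟨0, hKpos⟩ with hk0
      have hrel : θ j = (lam (Fin.castLE hKM k0) + σ0 ^ 2)⁻¹ * SigPy j := by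
        rw [hθj j, hSigPyj j, Finset.mul_sum]
        refine Finset.sum_congr rfl fun k _ => ?_
        rw [hc]
        simp only
        rw [hEq k k0, div_eq_mul_inv]
        ring
      rw [hrel, mul_ne_zero_iff]
      simp [inv_ne_zero (hden (Fin.castLE hKM k0))]
end
end

section
/- In the population noisy factor model with D := {j : w_j ≠ 0}, and for any nonempty subset C ⊆ D^c := {1,…,p} \ D, the population partial covariance between the response and the predictors indexed by C given the predictors indexed by D vanishes: Σ_{yC} − Σ_{yD} Σ_{DD}^{-1} Σ_{DC} = 0, where Σ_{yC} and Σ_{yD} denote the restrictions of the cross-covariance vector Σ_{Py} to the coordinate sets C and D, Σ_{DD} is the principal submatrix of Σ on D×D (which is invertible since Σ ⪰ σ_0² I), and Σ_{DC} is the submatrix of Σ with rows in D and columns in C. -/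
/-!
Statement 5: In the population noisy factor model, for any nonempty `C ⊆ Dᶜ`
(where `D = {j : w_j ≠ 0}`), the population partial covariance between the
response and the predictors in `C` given the predictors in `D` vanishes:
`Σ_{yC} − Σ_{yD} Σ_{DD}⁻¹ Σ_{DC} = 0`.
-/

open Matrix Finset

noncomputable section

theorem statement_5 (p M K : ℕ) (hMp : M ≤ p) (hKM : K ≤ M)
    (u : Fin p → Fin p → ℝ)
    (hu_orthonormal_basis : ∀ k k' : Fin p,
      (∑ j, u k j * u k' j) = if k = k' then (1 : ℝ) else 0)
    (lam : Fin M → ℝ) (hlam : ∀ k, 0 < lam k)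
    (σ0 : ℝ) (hσ0 : 0 < σ0) (β : Fin K → ℝ)
    (Sig : Matrix (Fin p) (Fin p) ℝ)
    (hSig : Sig = (∑ k : Fin M,
        lam k • vecMulVec (u (Fin.castLE hMp k)) (u (Fin.castLE hMp k)))
      + σ0 ^ 2 • (1 : Matrix (Fin p) (Fin p) ℝ))
    (SigPy : Fin p → ℝ)
    (hSigPy : SigPy = ∑ k : Fin K, (β k * Real.sqrt (lam (Fin.castLE hKM k))) •
        u (Fin.castLE hMp (Fin.castLE hKM k)))
    (w : Fin p → Fin K → ℝ)
    (hw : ∀ j k, w j k = Real.sqrt (lam (Fin.castLE hKM k)) *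
        u (Fin.castLE hMp (Fin.castLE hKM k)) j)
    (D C : Finset (Fin p))
    (hD : ∀ j, j ∈ D ↔ w j ≠ 0)
    (hC : ∀ j ∈ C, j ∉ D) (hCne : C.Nonempty)
    -- submatrices / subvectors
    (SigDD : Matrix {x // x ∈ D} {x // x ∈ D} ℝ)
    (hSigDD : SigDD = Sig.submatrix (Subtype.val : {x // x ∈ D} → Fin p) Subtype.val)
    (SigDC : Matrix {x // x ∈ D} {x // x ∈ C} ℝ)
    (hSigDC : SigDC = Sig.submatrix (Subtype.val : {x // x ∈ D} → Fin p)
        (Subtype.val : {x // x ∈ C} → Fin p))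
    (SigyD : {x // x ∈ D} → ℝ) (hSigyD : SigyD = fun d => SigPy d.1)
    (SigyC : {x // x ∈ C} → ℝ) (hSigyC : SigyC = fun c => SigPy c.1) :
    SigyC - SigyD ᵥ* (SigDD⁻¹ * SigDC) = 0 := by
  classical
  set K' : Fin K → Fin p := fun k => Fin.castLE hMp (Fin.castLE hKM k) with hK'
  -- support: for k < K, u (K' k) vanishes off D
  have hsupp : ∀ (k : Fin K) (j : Fin p), j ∉ D → u (K' k) j = 0 := by
    intro k j hj
    have hwj : w j = 0 := by
      by_contra h; exact hj ((hD j).mpr h)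
    have := hw j k
    rw [hwj] at this
    have hs : Real.sqrt (lam (Fin.castLE hKM k)) ≠ 0 :=
      Real.sqrt_ne_zero'.mpr (hlam _)
    have : (0 : ℝ) = Real.sqrt (lam (Fin.castLE hKM k)) *
        u (K' k) j := this
    field_simp at this
    exact (mul_eq_zero.mp this.symm).resolve_left hs
  -- SigyC = 0
  have hyC : SigyC = 0 := by
    funext c
    have hc := hC c.1 c.2
    simp only [hSigyC, hSigPy, Finset.sum_apply, Pi.smul_apply, smul_eq_mul]
    refine Finset.sum_eq_zero fun k _ => ?_
    rw [hsupp k c.1 hc, mul_zero]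
  -- key identity: row sums over D of u_k against Sig
  have hkey : ∀ (k : Fin K) (j : Fin p),
      (∑ d : {x // x ∈ D}, u (K' k) d.1 * Sig d.1 j)
        = (lam (Fin.castLE hKM k) + σ0 ^ 2) * u (K' k) j := by
    intro k j
    have h1 : (∑ d : {x // x ∈ D}, u (K' k) d.1 * Sig d.1 j)
        = ∑ d ∈ D, u (K' k) d * Sig d j := by
      rw [← Finset.sum_coe_sort D (fun d => u (K' k) d * Sig d j)]
    have h2 : (∑ d ∈ D, u (K' k) d * Sig d j)
        = ∑ d, u (K' k) d * Sig d j := by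
      refine Finset.sum_subset (Finset.subset_univ _) fun d _ hd => ?_
      rw [hsupp k d hd, zero_mul]
    rw [h1, h2, hSig]
    simp only [Matrix.add_apply, Matrix.sum_apply, Matrix.smul_apply,
      vecMulVec_apply, Matrix.one_apply, smul_eq_mul]
    have hx : ∀ d : Fin p,
        u (K' k) d * ((∑ m : Fin M, lam m * (u (Fin.castLE hMp m) d *
            u (Fin.castLE hMp m) j)) + σ0 ^ 2 * (if d = j then (1:ℝ) else 0))
          = (∑ m : Fin M, lam m * u (Fin.castLE hMp m) j *
              (u (K' k) d * u (Fin.castLE hMp m) d))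
            + σ0 ^ 2 * (if d = j then u (K' k) d else 0) := by
      intro d
      rw [mul_add, Finset.mul_sum]
      congr 1
      · exact Finset.sum_congr rfl fun m _ => by ring
      · split <;> ring
    simp only [hx]
    rw [Finset.sum_add_distrib, Finset.sum_comm]
    have h3 : ∀ m : Fin M,
        (∑ d, lam m * u (Fin.castLE hMp m) j * (u (K' k) d * u (Fin.castLE hMp m) d))
          = lam m * u (Fin.castLE hMp m) j *
              (if K' k = Fin.castLE hMp m then (1:ℝ) else 0) := by
      intro m
      rw [← Finset.mul_sum, hu_orthonormal_basis]
    simp only [h3]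
    have hinj : ∀ m : Fin M, (K' k = Fin.castLE hMp m) ↔ m = Fin.castLE hKM k := by
      intro m
      constructor
      · intro h
        exact ((Fin.castLE_injective hMp) h.symm)
      · intro h; rw [h]
    have h4 : (∑ m : Fin M, lam m * u (Fin.castLE hMp m) j *
          (if K' k = Fin.castLE hMp m then (1:ℝ) else 0))
        = lam (Fin.castLE hKM k) * u (K' k) j := by
      simp only [hinj, mul_ite, mul_one, mul_zero]
      rw [Finset.sum_ite_eq' Finset.univ (Fin.castLE hKM k)
        (fun m => lam m * u (Fin.castLE hMp m) j)]
      simp [hK']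
    rw [h4]
    have h5 : (∑ d : Fin p, σ0 ^ 2 * (if d = j then u (K' k) d else 0))
        = σ0 ^ 2 * u (K' k) j := by
      rw [← Finset.mul_sum]
      congr 1
      simp
    rw [h5]; ring
  -- the vector x with x ᵥ* SigDD = SigyD
  set x : {a // a ∈ D} → ℝ := fun d => ∑ k : Fin K,
      (β k * Real.sqrt (lam (Fin.castLE hKM k)) / (lam (Fin.castLE hKM k) + σ0 ^ 2))
        * u (K' k) d.1 with hxdef
  have hpos : ∀ k : Fin K, lam (Fin.castLE hKM k) + σ0 ^ 2 ≠ 0 := fun k =>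
    (add_pos (hlam _) (pow_pos hσ0 2)).ne'
  have hrow : ∀ j : Fin p,
      (∑ d : {a // a ∈ D}, x d * Sig d.1 j)
        = ∑ k : Fin K, (β k * Real.sqrt (lam (Fin.castLE hKM k))) * u (K' k) j := by
    intro j
    simp only [hxdef, Finset.sum_mul]
    rw [Finset.sum_comm]
    refine Finset.sum_congr rfl fun k _ => ?_
    have : (∑ d : {a // a ∈ D},
        (β k * Real.sqrt (lam (Fin.castLE hKM k)) / (lam (Fin.castLE hKM k) + σ0 ^ 2))
          * u (K' k) d.1 * Sig d.1 j)
        = (β k * Real.sqrt (lam (Fin.castLE hKM k)) / (lam (Fin.castLE hKM k) + σ0 ^ 2))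
          * ∑ d : {a // a ∈ D}, u (K' k) d.1 * Sig d.1 j := by
      rw [Finset.mul_sum]
      exact Finset.sum_congr rfl fun d _ => by ring
    rw [this, hkey k j]
    have hc := hpos k
    field_simp
  have hxD : x ᵥ* SigDD = SigyD := by
    funext d'
    rw [hSigDD, hSigyD]
    simp only [vecMul, dotProduct, submatrix_apply]
    rw [hrow d'.1, hSigPy]
    simp only [Finset.sum_apply, Pi.smul_apply, smul_eq_mul]
    rfl
  have hxC : x ᵥ* SigDC = 0 := by
    funext c
    rw [hSigDC]
    simp only [vecMul, dotProduct, submatrix_apply, Pi.zero_apply]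
    rw [hrow c.1]
    refine Finset.sum_eq_zero fun k _ => ?_
    rw [hsupp k c.1 (hC c.1 c.2), mul_zero]
  by_cases hdet : IsUnit SigDD.det
  · have : SigyD ᵥ* (SigDD⁻¹ * SigDC) = x ᵥ* SigDC := by
      rw [← hxD, Matrix.vecMul_vecMul, ← Matrix.mul_assoc,
        Matrix.mul_nonsing_inv _ hdet, Matrix.one_mul]
    rw [hyC, this, hxC, sub_zero]
  · rw [Matrix.nonsing_inv_apply_not_isUnit _ hdet, Matrix.zero_mul,
      Matrix.vecMul_zero, hyC, sub_zero]
end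
end
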